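/- Let C be a (k,r,h) local maximally recoverable code over F_q with exactly two local groups (so k + h = 2r, r+1 ≤ k < 2r, and n = 2r + 2), and let r - h + 1 ≤ s ≤ 2r - h. Then the s-th higher support weight enumerator coefficients satisfy A^{(s)}_w = C(n,w) · Σ_{j=0}^{w-n+2r-h-s} C(w,j) (-1)^j [k-n+w-j choose s]_q for h+2+s ≤ w ≤ n, and A^{(s)}_w = 0 for w < h+2+s, where C(a,b) denotes the binomial coefficient. -/

import Mathlib

set_option maxHeartbeats 1000000
set_option linter.unusedSectionVars false


open Finset

/-- Coordinate index set of a `(k,r,h)` local code with `ℓ = (k+h)/r` local groups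
(see stmt 4). -/
abbrev LIdx (k h ℓ : ℕ) : Type := Fin (k + h) ⊕ Fin ℓ

/-- The support `S_i` of the `i`-th local group. -/
def lGroup (k h r ℓ : ℕ) (i : Fin ℓ) : Finset (LIdx k h ℓ) :=
  insert (Sum.inr i)
    ((Finset.univ.filter fun t : Fin (k + h) =>
      (i : ℕ) * r ≤ (t : ℕ) ∧ (t : ℕ) < ((i : ℕ) + 1) * r).image Sum.inl)

/-- The `j`-th coordinate of the `i`-th local group among the first `k + h` coordinates. -/
def lCoord (k h r ℓ : ℕ) (hkh : k + h = ℓ * r) (i : Fin ℓ) (j : Fin r) : Fin (k + h) :=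
  ⟨(i : ℕ) * r + (j : ℕ), by
    have hi : (i : ℕ) + 1 ≤ ℓ := i.2
    have hj : (j : ℕ) < r := j.2
    have h1 : ((i : ℕ) + 1) * r ≤ ℓ * r := Nat.mul_le_mul_right r hi
    have h2 : ((i : ℕ) + 1) * r = (i : ℕ) * r + r := by ring
    omega⟩

/-- The Gaussian binomial coefficient `[t choose s]_q`, taken to be `0` when `t < s`. -/
def gbinom (q t s : ℕ) : ℚ :=
  if s ≤ t then
    (∏ i ∈ Finset.range s, ((q : ℚ) ^ t - (q : ℚ) ^ i)) /
      (∏ i ∈ Finset.range s, ((q : ℚ) ^ s - (q : ℚ) ^ i))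
  else 0

open Module

section GaussCount

variable {F : Type*} [Field F] [Fintype F] {V : Type*} [AddCommGroup V] [Module F V]
  [Module.Finite F V]

private lemma card_span_fin {s : ℕ} [Finite V] (f : Fin s → V) (hf : LinearIndependent F f) :
    Nat.card (Submodule.span F (Set.range f)) = Fintype.card F ^ s := by
  classical
  haveI : Fintype V := Fintype.ofFinite V
  haveI : Fintype (Submodule.span F (Set.range f)) := Fintype.ofFinite _
  have h1 : finrank F (Submodule.span F (Set.range f)) = s := by
    rw [finrank_span_eq_card hf, Fintype.card_fin]
  rw [Nat.card_eq_fintype_card, card_eq_pow_finrank (K := F), h1]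

private lemma card_V [Finite V] : Nat.card V = Fintype.card F ^ finrank F V := by
  haveI : Fintype V := Fintype.ofFinite V
  rw [Nat.card_eq_fintype_card, card_eq_pow_finrank (K := F)]

private lemma card_li [Finite V] (s : ℕ) :
    Nat.card {f : Fin s → V // LinearIndependent F f} =
      ∏ i ∈ Finset.range s, (Fintype.card F ^ finrank F V - Fintype.card F ^ i) := by
  classical
  induction s with
  | zero =>
      haveI : Unique {f : Fin 0 → V // LinearIndependent F f} :=
        { default := ⟨Fin.elim0, linearIndependent_empty_type⟩
          uniq := fun f => Subtype.ext (funext fun i => i.elim0) }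
      simp [Nat.card_unique]
  | succ s ih =>
      haveI : Fintype V := Fintype.ofFinite V
      have E : {f : Fin (s+1) → V // LinearIndependent F f} ≃
          Σ g : {f : Fin s → V // LinearIndependent F f},
            {v : V // v ∉ Submodule.span F (Set.range g.1)} :=
        { toFun := fun f =>
            ⟨⟨Fin.init f.1, (linearIndependent_fin_snoc.mp
                (by rw [Fin.snoc_init_self]; exact f.2)).1⟩,
             ⟨f.1 (Fin.last s), (linearIndependent_fin_snoc.mp
                (by rw [Fin.snoc_init_self]; exact f.2)).2⟩⟩
          invFun := fun p => ⟨Fin.snoc p.1.1 p.2.1,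
            linearIndependent_fin_snoc.mpr ⟨p.1.2, p.2.2⟩⟩
          left_inv := fun f => Subtype.ext (Fin.snoc_init_self f.1)
          right_inv := fun p => by
            rcases p with ⟨⟨g, hg⟩, ⟨v, hv⟩⟩
            refine Sigma.ext (Subtype.ext (by simp)) ?_
            refine (Subtype.heq_iff_coe_eq ?_).mpr (by simp)
            intro x
            simp }
      rw [Nat.card_congr E]
      haveI : Fintype {f : Fin s → V // LinearIndependent F f} := Fintype.ofFinite _
      haveI : ∀ g : {f : Fin s → V // LinearIndependent F f},
          Fintype {v : V // v ∉ Submodule.span F (Set.range g.1)} := fun g => Fintype.ofFinite _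
      rw [Nat.card_eq_fintype_card, Fintype.card_sigma]
      have hfib : ∀ g : {f : Fin s → V // LinearIndependent F f},
          Fintype.card {v : V // v ∉ Submodule.span F (Set.range g.1)} =
            Fintype.card F ^ finrank F V - Fintype.card F ^ s := by
        intro g
        have hc : Fintype.card {v : V // v ∈ Submodule.span F (Set.range g.1)} =
            Fintype.card F ^ s := by
          have := card_span_fin (F := F) g.1 g.2
          rwa [Nat.card_eq_fintype_card] at this
        rw [Fintype.card_subtype_compl, hc, card_eq_pow_finrank (K := F)]
      rw [Finset.sum_congr rfl (fun g _ => hfib g), Finset.sum_const, smul_eq_mul,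
        Finset.card_univ, Finset.prod_range_succ, ← ih, Nat.card_eq_fintype_card]

private lemma card_subspaces_mul [Finite V] (s : ℕ) :
    Nat.card {D : Submodule F V // finrank F D = s} *
        ∏ i ∈ Finset.range s, (Fintype.card F ^ s - Fintype.card F ^ i) =
      ∏ i ∈ Finset.range s, (Fintype.card F ^ finrank F V - Fintype.card F ^ i) := by
  classical
  rw [← card_li (F := F) (V := V) s]
  set π : {f : Fin s → V // LinearIndependent F f} → {D : Submodule F V // finrank F D = s} :=
    fun f => ⟨Submodule.span F (Set.range f.1), by
      rw [finrank_span_eq_card f.2, Fintype.card_fin]⟩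
  have E0 : (Σ D : {D : Submodule F V // finrank F D = s}, {f // π f = D}) ≃
      {f : Fin s → V // LinearIndependent F f} := Equiv.sigmaFiberEquiv π
  rw [← Nat.card_congr E0]
  have Efib : ∀ D : {D : Submodule F V // finrank F D = s},
      {f // π f = D} ≃ {g : Fin s → ↥D.1 // LinearIndependent F g} := by
    intro D
    have hspan : ∀ f : {f : Fin s → V // LinearIndependent F f}, π f = D →
        ∀ i, f.1 i ∈ D.1 := by
      intro f hf i
      have hsp : Submodule.span F (Set.range f.1) = D.1 := congrArg Subtype.val hf
      rw [← hsp]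
      exact Submodule.subset_span ⟨i, rfl⟩
    have hback : ∀ g : {g : Fin s → ↥D.1 // LinearIndependent F g},
        π ⟨fun i => (g.1 i : V), g.2.map' D.1.subtype (Submodule.ker_subtype _)⟩ = D := by
      intro g
      refine Subtype.ext ?_
      show Submodule.span F (Set.range fun i => ((g.1 i : V))) = D.1
      have h1 : (Set.range fun i => ((g.1 i : V))) = D.1.subtype '' Set.range g.1 := by
        rw [← Set.range_comp]; rfl
      rw [h1, ← Submodule.map_span]
      have h2 : Submodule.span F (Set.range g.1) = ⊤ := by
        apply Submodule.eq_top_of_finrank_eq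
        rw [finrank_span_eq_card g.2, Fintype.card_fin, D.2]
      rw [h2, Submodule.map_subtype_top]
    exact
      { toFun := fun f => ⟨fun i => ⟨f.1.1 i, hspan f.1 f.2 i⟩,
          LinearIndependent.of_comp D.1.subtype f.1.2⟩
        invFun := fun g => ⟨⟨fun i => (g.1 i : V),
          g.2.map' D.1.subtype (Submodule.ker_subtype _)⟩, hback g⟩
        left_inv := fun f => Subtype.ext (Subtype.ext (funext fun i => rfl))
        right_inv := fun g => Subtype.ext (funext fun i => Subtype.ext rfl) }
  haveI : Fintype {D : Submodule F V // finrank F D = s} := Fintype.ofFinite _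
  haveI : ∀ D : {D : Submodule F V // finrank F D = s}, Fintype {f // π f = D} :=
    fun D => Fintype.ofFinite _
  have hsig : Nat.card ((D : {D : Submodule F V // finrank F D = s}) × {f // π f = D}) =
      ∑ D : {D : Submodule F V // finrank F D = s}, Fintype.card {f // π f = D} := by
    rw [Nat.card_eq_fintype_card, Fintype.card_sigma]
  rw [hsig]
  have hfib : ∀ D : {D : Submodule F V // finrank F D = s},
      Fintype.card {f // π f = D} =
        ∏ i ∈ Finset.range s, (Fintype.card F ^ s - Fintype.card F ^ i) := by
    intro D
    rw [← Nat.card_eq_fintype_card, Nat.card_congr (Efib D)]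
    have := card_li (F := F) (V := ↥D.1) s
    rwa [D.2] at this
  rw [Finset.sum_congr rfl (fun D _ => hfib D), Finset.sum_const, smul_eq_mul,
    Finset.card_univ, Nat.card_eq_fintype_card]

lemma card_subspaces_q [Finite V] (s : ℕ) :
    (Nat.card {D : Submodule F V // finrank F D = s} : ℚ) =
      gbinom (Fintype.card F) (finrank F V) s := by
  classical
  set q := Fintype.card F with hqdef
  set t := finrank F V with htdef
  have hq2 : 1 < q := Fintype.one_lt_card
  by_cases hst : s ≤ t
  · rw [gbinom, if_pos hst]
    have key := card_subspaces_mul (F := F) (V := V) s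
    have hcastN : ∀ (m : ℕ), s ≤ m → ((∏ i ∈ Finset.range s, (q ^ m - q ^ i) : ℕ) : ℚ) =
        ∏ i ∈ Finset.range s, ((q : ℚ) ^ m - (q : ℚ) ^ i) := by
      intro m hm
      rw [Nat.cast_prod]
      refine Finset.prod_congr rfl fun i hi => ?_
      rw [Finset.mem_range] at hi
      have : q ^ i ≤ q ^ m := Nat.pow_le_pow_right (le_of_lt hq2) (le_trans (le_of_lt hi) hm)
      push_cast [Nat.cast_sub this]; ring
    have hden : (∏ i ∈ Finset.range s, ((q : ℚ) ^ s - (q : ℚ) ^ i)) ≠ 0 := by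
      refine Finset.prod_ne_zero_iff.mpr fun i hi => ?_
      rw [Finset.mem_range] at hi
      have : (q : ℚ) ^ i < (q : ℚ) ^ s := by
        apply pow_lt_pow_right₀ (by exact_mod_cast hq2) hi
      linarith
    rw [eq_div_iff hden]
    calc (Nat.card {D : Submodule F V // finrank F D = s} : ℚ) *
          ∏ i ∈ Finset.range s, ((q : ℚ) ^ s - (q : ℚ) ^ i)
        = ((Nat.card {D : Submodule F V // finrank F D = s} *
            ∏ i ∈ Finset.range s, (q ^ s - q ^ i) : ℕ) : ℚ) := by
          rw [Nat.cast_mul, hcastN s le_rfl]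
      _ = ((∏ i ∈ Finset.range s, (q ^ t - q ^ i) : ℕ) : ℚ) := by rw [key]
      _ = ∏ i ∈ Finset.range s, ((q : ℚ) ^ t - (q : ℚ) ^ i) := hcastN t hst
  · rw [gbinom, if_neg hst]
    have : IsEmpty {D : Submodule F V // finrank F D = s} := by
      refine ⟨fun D => hst ?_⟩
      rw [← D.2, htdef]
      exact Submodule.finrank_le D.1
    rw [Nat.card_of_isEmpty, Nat.cast_zero]

end GaussCount

section Mobius
variable {α : Type*} [DecidableEq α]

lemma alt_sum_powerset (x : Finset α) :
    ∑ V ∈ x.powerset, (-1 : ℚ) ^ V.card = if x = ∅ then 1 else 0 := by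
  have := Finset.sum_powerset_neg_one_pow_card (x := x)
  have h2 : ((∑ V ∈ x.powerset, (-1 : ℤ) ^ V.card : ℤ) : ℚ) =
      ∑ V ∈ x.powerset, (-1 : ℚ) ^ V.card := by push_cast; rfl
  rw [← h2, this]
  split <;> norm_num

lemma neg_one_pow_sub (a b : ℕ) (h : b ≤ a) : (-1:ℚ)^(a-b) = (-1)^a * (-1)^b := by
  have h1 : (-1:ℚ)^(a-b) * (-1)^b = (-1)^a := by
    rw [← pow_add]
    congr 1
    omega
  have h2 : (-1:ℚ)^b * (-1)^b = 1 := by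
    rw [← pow_add, Even.neg_one_pow ⟨b, rfl⟩]
  calc (-1:ℚ)^(a-b) = (-1:ℚ)^(a-b) * ((-1)^b * (-1)^b) := by rw [h2, mul_one]
    _ = (-1)^a * (-1)^b := by rw [← mul_assoc, h1]

lemma mobius_powerset (f g : Finset α → ℚ)
    (hg : ∀ T, g T = ∑ T' ∈ T.powerset, f T') (T : Finset α) :
    f T = ∑ T' ∈ T.powerset, (-1 : ℚ) ^ (T.card - T'.card) * g T' := by
  have key : ∑ T' ∈ T.powerset, (-1 : ℚ) ^ (T.card - T'.card) * g T' =
      ∑ U ∈ T.powerset, (∑ T' ∈ T.powerset.filter (fun T' => U ⊆ T'),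
        (-1 : ℚ) ^ (T.card - T'.card)) * f U := by
    have h0 : ∀ T' ∈ T.powerset, (-1:ℚ)^(T.card - T'.card) * g T' =
        ∑ U ∈ T'.powerset, (-1:ℚ)^(T.card - T'.card) * f U := by
      intro T' _
      rw [hg T', Finset.mul_sum]
    rw [Finset.sum_congr rfl h0]
    rw [Finset.sum_comm' (s := T.powerset) (t := fun T' => T'.powerset)
      (t' := T.powerset) (s' := fun U => T.powerset.filter (fun T' => U ⊆ T'))
      (by
        intro T' U
        simp only [Finset.mem_powerset, Finset.mem_filter]
        constructor
        · rintro ⟨h1, h2⟩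
          exact ⟨⟨h1, h2⟩, h2.trans h1⟩
        · rintro ⟨⟨h1, h2⟩, h3⟩
          exact ⟨h1, h2⟩)]
    exact Finset.sum_congr rfl fun U _ => (Finset.sum_mul _ _ _).symm
  rw [key]
  have inner : ∀ U ∈ T.powerset,
      (∑ T' ∈ T.powerset.filter (fun T' => U ⊆ T'), (-1 : ℚ) ^ (T.card - T'.card)) =
        if U = T then 1 else 0 := by
    intro U hU
    rw [Finset.mem_powerset] at hU
    have hbij : ∑ T' ∈ T.powerset.filter (fun T' => U ⊆ T'), (-1 : ℚ) ^ (T.card - T'.card) =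
        ∑ V ∈ (T \ U).powerset, (-1 : ℚ) ^ (T.card - (U.card + V.card)) := by
      refine Finset.sum_nbij' (fun T' => T' \ U) (fun V => U ∪ V) ?_ ?_ ?_ ?_ ?_
      · intro T' hT'
        simp only [Finset.mem_filter, Finset.mem_powerset] at hT' ⊢
        exact Finset.sdiff_subset_sdiff hT'.1 Finset.Subset.rfl
      · intro V hV
        simp only [Finset.mem_powerset] at hV
        simp only [Finset.mem_filter, Finset.mem_powerset]
        exact ⟨Finset.union_subset hU (hV.trans (Finset.sdiff_subset)), Finset.subset_union_left⟩
      · intro T' hT'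
        simp only [Finset.mem_filter, Finset.mem_powerset] at hT'
        exact Finset.union_sdiff_of_subset hT'.2
      · intro V hV
        simp only [Finset.mem_powerset] at hV
        have : Disjoint U V := Finset.disjoint_of_subset_right hV Finset.sdiff_disjoint.symm
        exact Finset.union_sdiff_cancel_left this
      · intro T' hT'
        simp only [Finset.mem_filter, Finset.mem_powerset] at hT'
        rw [Finset.card_sdiff_of_subset hT'.2]
        have hc1 : U.card ≤ T'.card := Finset.card_le_card hT'.2
        have hc2 : T'.card ≤ T.card := Finset.card_le_card hT'.1
        congr 1
        omega
    rw [hbij]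
    have hexp : ∀ V ∈ (T \ U).powerset,
        (-1 : ℚ) ^ (T.card - (U.card + V.card)) =
          (-1 : ℚ) ^ ((T \ U).card) * (-1 : ℚ) ^ V.card := by
      intro V hV
      rw [Finset.mem_powerset] at hV
      have h1 : V.card ≤ (T \ U).card := Finset.card_le_card hV
      have h2 : (T \ U).card = T.card - U.card := Finset.card_sdiff_of_subset hU
      have h3 : U.card ≤ T.card := Finset.card_le_card hU
      have h5 : U.card + V.card ≤ T.card := by omega
      rw [neg_one_pow_sub _ _ h5, h2, neg_one_pow_sub _ _ h3, pow_add]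
      ring
    rw [Finset.sum_congr rfl hexp, ← Finset.mul_sum, alt_sum_powerset]
    by_cases hUT : U = T
    · simp [hUT, if_pos]
    · have : T \ U ≠ ∅ := by
        intro hemp
        exact hUT (Finset.Subset.antisymm hU (by
          intro x hx
          by_contra hxU
          exact absurd (Finset.mem_sdiff.mpr ⟨hx, hxU⟩) (by rw [hemp]; exact Finset.notMem_empty x)))
      rw [if_neg this, if_neg hUT, mul_zero]
  rw [Finset.sum_congr rfl (fun U hU => by rw [inner U hU])]
  simp only [ite_mul, one_mul, zero_mul]
  rw [Finset.sum_ite_eq' T.powerset T f, if_pos (Finset.mem_powerset.mpr Finset.Subset.rfl)]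

end Mobius

section Code

variable {k h r : ℕ} {F : Type} [Field F] [Fintype F] [DecidableEq F]

def zeroOnSet (F : Type*) [Field F] {ι : Type*} (T : Finset ι) : Submodule F (ι → F) where
  carrier := {c | ∀ i ∉ T, c i = 0}
  add_mem' := by
    intro a b ha hb i hi
    simp only [Pi.add_apply, ha i hi, hb i hi, add_zero]
  zero_mem' := by intro i hi; rfl
  smul_mem' := by
    intro m a ha i hi
    simp only [Pi.smul_apply, ha i hi, smul_zero]

lemma mem_zeroOnSet {ι : Type*} {T : Finset ι} {c : ι → F} :
    c ∈ zeroOnSet F T ↔ ∀ i ∉ T, c i = 0 := Iff.rfl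

lemma inl_mem_lGroup {t : Fin (k + h)} {i : Fin 2} :
    Sum.inl t ∈ lGroup k h r 2 i ↔ ((i : ℕ) * r ≤ (t : ℕ) ∧ (t : ℕ) < ((i : ℕ) + 1) * r) := by
  simp [lGroup]

lemma inr_mem_lGroup {j i : Fin 2} : Sum.inr j ∈ lGroup k h r 2 i ↔ j = i := by
  simp [lGroup]

lemma lGroup_cover (hkh : k + h = 2 * r) (y : LIdx k h 2) :
    y ∈ lGroup k h r 2 0 ∨ y ∈ lGroup k h r 2 1 := by
  rcases y with t | j
  · rcases Nat.lt_or_ge (t : ℕ) r with hlt | hge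
    · left
      rw [inl_mem_lGroup]
      simpa using hlt
    · right
      rw [inl_mem_lGroup]
      have h2 : (t : ℕ) < 2 * r := by
        have := t.2
        omega
      have hgoal : (1 : ℕ) * r ≤ (t : ℕ) ∧ (t : ℕ) < (1 + 1) * r := by
        constructor <;> omega
      exact hgoal
  · rcases Fin.exists_fin_two.mp ⟨j, rfl⟩ with h1 | h1 <;>
      [left; right] <;> rw [inr_mem_lGroup] <;> omega
  
lemma lGroup_not_mem_both (hr : 1 ≤ r) {y : LIdx k h 2} :
    ¬(y ∈ lGroup k h r 2 0 ∧ y ∈ lGroup k h r 2 1) := by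
  rintro ⟨h0, h1⟩
  rcases y with t | j
  · rw [inl_mem_lGroup] at h0 h1
    simp only [Fin.val_zero, Fin.val_one] at h0 h1
    omega
  · rw [inr_mem_lGroup] at h0 h1
    rw [h0] at h1
    exact absurd h1 (by decide)

lemma filter_interval_card (N a b : ℕ) (hb : b ≤ N) :
    (Finset.univ.filter fun t : Fin N => a ≤ (t : ℕ) ∧ (t : ℕ) < b).card = b - a := by
  rw [← Finset.card_image_of_injective _ Fin.val_injective]
  have him : (Finset.univ.filter fun t : Fin N => a ≤ (t : ℕ) ∧ (t : ℕ) < b).image Fin.val =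
      Finset.Ico a b := by
    ext m
    simp only [Finset.mem_image, Finset.mem_filter, Finset.mem_univ, true_and, Finset.mem_Ico]
    constructor
    · rintro ⟨t, ⟨h1, h2⟩, rfl⟩
      exact ⟨h1, h2⟩
    · rintro ⟨h1, h2⟩
      exact ⟨⟨m, lt_of_lt_of_le h2 hb⟩, ⟨h1, h2⟩, rfl⟩
  rw [him, Nat.card_Ico]

lemma lGroup_card (hkh : k + h = 2 * r) (i : Fin 2) : (lGroup k h r 2 i).card = r + 1 := by
  have hi2 : (i : ℕ) < 2 := i.2
  have hb : ((i : ℕ) + 1) * r ≤ k + h := by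
    rw [hkh]
    exact Nat.mul_le_mul_right r (by omega)
  rw [lGroup, Finset.card_insert_of_notMem (by simp),
    Finset.card_image_of_injective _ Sum.inl_injective, filter_interval_card _ _ _ hb]
  have hexp : ((i : ℕ) + 1) * r = (i : ℕ) * r + r := by ring
  omega

lemma finrank_code (C : Submodule F (LIdx k h 2 → F))
    (hsys : ∀ x : Fin k → F, ∃! c : LIdx k h 2 → F,
      c ∈ C ∧ ∀ j : Fin k, c (Sum.inl (Fin.castLE (Nat.le_add_right k h) j)) = x j) :
    Module.finrank F C = k := by
  let π : C →ₗ[F] (Fin k → F) :=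
    { toFun := fun c j => c.1 (Sum.inl (Fin.castLE (Nat.le_add_right k h) j))
      map_add' := fun _ _ => rfl
      map_smul' := fun _ _ => rfl }
  have hbij : Function.Bijective π := by
    constructor
    · intro c1 c2 hc
      obtain ⟨c, _, huniq⟩ := hsys (π c1)
      have h1 : c1.1 = c := huniq c1.1 ⟨c1.2, fun j => rfl⟩
      have h2 : c2.1 = c := huniq c2.1 ⟨c2.2, fun j => (congrFun hc j).symm⟩
      exact Subtype.ext (h1.trans h2.symm)
    · intro x
      obtain ⟨c, ⟨hcC, hcx⟩, _⟩ := hsys x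
      exact ⟨⟨c, hcC⟩, funext hcx⟩
  rw [(LinearEquiv.ofBijective π hbij).finrank_eq, Module.finrank_fintype_fun_eq_card,
    Fintype.card_fin]

lemma restrict_injective (C : Submodule F (LIdx k h 2 → F)) (hrank : Module.finrank F C = k)
    (E : Finset (LIdx k h 2))
    (hdim : Module.finrank F
      (C.map (LinearMap.funLeft F F (Subtype.val : ↥E → LIdx k h 2))) = k) :
    ∀ c ∈ C, LinearMap.funLeft F F (Subtype.val : ↥E → LIdx k h 2) c = 0 → c = 0 := by
  set ρ := LinearMap.funLeft F F (Subtype.val : ↥E → LIdx k h 2) with hρ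
  have h1 : LinearMap.range (ρ.comp C.subtype) = C.map ρ := by
    rw [LinearMap.range_comp, Submodule.range_subtype]
  have h2 := LinearMap.finrank_range_add_finrank_ker (ρ.comp C.subtype)
  rw [h1, hdim, hrank] at h2
  have h3 : Module.finrank F (LinearMap.ker (ρ.comp C.subtype)) = 0 := by omega
  rw [Submodule.finrank_eq_zero] at h3
  intro c hc hc0
  have hmem : (⟨c, hc⟩ : C) ∈ LinearMap.ker (ρ.comp C.subtype) := by
    rw [LinearMap.mem_ker]
    exact hc0
  rw [h3, Submodule.mem_bot] at hmem
  exact congrArg Subtype.val hmem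

lemma dim_shortened_le (C : Submodule F (LIdx k h 2 → F)) (hrank : Module.finrank F C = k)
    (E : Finset (LIdx k h 2))
    (hdim : Module.finrank F
      (C.map (LinearMap.funLeft F F (Subtype.val : ↥E → LIdx k h 2))) = k)
    (hwt : ∀ y ∈ C.map (LinearMap.funLeft F F (Subtype.val : ↥E → LIdx k h 2)),
      y ≠ 0 → h + 1 ≤ hammingNorm y)
    (T M : Finset (LIdx k h 2)) (hM : M ⊆ E) (hTM : ∀ x ∈ T, x ∈ E → x ∈ M) :
    Module.finrank F ↥(C ⊓ zeroOnSet F T) ≤ M.card - h := by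
  classical
  obtain ⟨M₀, hM₀sub, hM₀card⟩ := Finset.exists_subset_card_eq (min_le_right h M.card)
  set ρ := LinearMap.funLeft F F (Subtype.val : ↥E → LIdx k h 2) with hρ
  set W := C ⊓ zeroOnSet F T with hW
  let ψ : ↥W →ₗ[F] (↥(M \ M₀) → F) :=
    { toFun := fun c x => c.1 x.1
      map_add' := fun _ _ => rfl
      map_smul' := fun _ _ => rfl }
  have hinj0 : ∀ c : ↥W, ψ c = 0 → c = 0 := by
    intro c hc
    have hcC : c.1 ∈ C := c.2.1
    have hcT : ∀ i ∉ T, c.1 i = 0 := c.2.2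
    have hy : ρ c.1 ∈ C.map ρ := Submodule.mem_map_of_mem hcC
    have hdefn : hammingNorm (ρ c.1) = (Finset.univ.filter fun e : ↥E => ρ c.1 e ≠ 0).card := rfl
    have hynorm : hammingNorm (ρ c.1) ≤ M₀.card := by
      rw [hdefn]
      apply Finset.card_le_card_of_injOn (fun e => e.1)
      · intro e he
        rw [Finset.mem_coe, Finset.mem_filter] at he
        have hne : c.1 e.1 ≠ 0 := he.2
        have heT : e.1 ∈ T := by
          by_contra hnT
          exact hne (hcT _ hnT)
        have heM : e.1 ∈ M := hTM _ heT e.2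
        by_contra heM₀
        have hmem : (e.1 : LIdx k h 2) ∈ M \ M₀ := Finset.mem_sdiff.mpr ⟨heM, heM₀⟩
        exact hne (congrFun hc ⟨e.1, hmem⟩)
      · intro a _ b _ hab
        exact Subtype.ext hab
    have hy0 : ρ c.1 = 0 := by
      by_contra hne
      have := hwt _ hy hne
      omega
    have : c.1 = 0 := restrict_injective C hrank E hdim c.1 hcC hy0
    exact Subtype.ext this
  have hinj : Function.Injective ψ := by
    intro a b hab
    have h0 : ψ (a - b) = 0 := by rw [map_sub, hab, sub_self]
    have := hinj0 _ h0
    rwa [sub_eq_zero] at this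
  have hle := LinearMap.finrank_le_finrank_of_injective hinj
  rw [Module.finrank_fintype_fun_eq_card, Fintype.card_coe, Finset.card_sdiff_of_subset hM₀sub,
    hM₀card] at hle
  omega

lemma dim_shortened_ge (C : Submodule F (LIdx k h 2 → F)) (hrank : Module.finrank F C = k)
    (T : Finset (LIdx k h 2)) :
    k ≤ Module.finrank F ↥(C ⊓ zeroOnSet F T) + (Tᶜ).card := by
  classical
  set φ := (LinearMap.funLeft F F (Subtype.val : ↥(Tᶜ) → LIdx k h 2)).comp C.subtype with hφ
  have h2 := LinearMap.finrank_range_add_finrank_ker φ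
  have hr1 : Module.finrank F (LinearMap.range φ) ≤ (Tᶜ).card := by
    have h3 := Submodule.finrank_le (LinearMap.range φ)
    rwa [Module.finrank_fintype_fun_eq_card, Fintype.card_coe] at h3
  have hker : LinearMap.ker φ = Submodule.comap C.subtype (C ⊓ zeroOnSet F T) := by
    ext x
    simp only [LinearMap.mem_ker, Submodule.mem_comap, Submodule.mem_inf]
    constructor
    · intro hx
      refine ⟨x.2, fun i hi => ?_⟩
      exact congrFun hx ⟨i, Finset.mem_compl.mpr hi⟩
    · intro hx
      funext e
      exact hx.2 e.1 (Finset.mem_compl.mp e.2)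
  have hkerrank : Module.finrank F (LinearMap.ker φ) =
      Module.finrank F ↥(C ⊓ zeroOnSet F T) := by
    rw [hker]
    exact (Submodule.comapSubtypeEquivOfLe inf_le_left).finrank_eq
  rw [hkerrank, hrank] at h2
  omega

end Code


lemma gbinom_eq_zero (q t s : ℕ) (hts : t < s) : gbinom q t s = 0 := by
  unfold gbinom
  rw [if_neg (by omega)]

lemma card_subspaces_le_q {F V : Type*} [Field F] [Fintype F] [AddCommGroup V] [Module F V]
    [Module.Finite F V] [Finite V] (W : Submodule F V) (s : ℕ) :
    (Nat.card {D : Submodule F V // D ≤ W ∧ Module.finrank F D = s} : ℚ) =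
      gbinom (Fintype.card F) (Module.finrank F W) s := by
  classical
  set e := Submodule.MapSubtype.orderIso W with he
  have hmap : ∀ q : Submodule F ↥W, ((e q : {p' // p' ≤ W}) : Submodule F V) =
      Submodule.map W.subtype q := fun q => rfl
  have E : {D : Submodule F V // D ≤ W ∧ Module.finrank F D = s} ≃
      {D' : Submodule F ↥W // Module.finrank F D' = s} :=
    { toFun := fun D => ⟨e.symm ⟨D.1, D.2.1⟩, by
        have h1 : Submodule.map W.subtype (e.symm ⟨D.1, D.2.1⟩) = D.1 := by
          rw [← hmap]
          exact congrArg Subtype.val (e.apply_symm_apply ⟨D.1, D.2.1⟩)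
        rw [← Submodule.finrank_map_subtype_eq W (e.symm ⟨D.1, D.2.1⟩), h1]
        exact D.2.2⟩
      invFun := fun D' => ⟨(e D'.1 : {p' // p' ≤ W}), (e D'.1).2, by
        rw [hmap, Submodule.finrank_map_subtype_eq, D'.2]⟩
      left_inv := fun D => by
        apply Subtype.ext
        show ((e (e.symm ⟨D.1, D.2.1⟩) : {p' // p' ≤ W}) : Submodule F V) = D.1
        rw [e.apply_symm_apply]
      right_inv := fun D' => Subtype.ext (e.symm_apply_apply D'.1) }
  rw [Nat.card_congr E, card_subspaces_q]

/-- higher support weight enumerator coefficients (for `r-h+1 ≤ s ≤ 2r-h`) of a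
`(k,r,h)` local MRC over `F_q` with two local groups
(`k + h = 2r`, `r + 1 ≤ k < 2r`, `n = 2r + 2`):
`A^{(s)}_w = C(n,w) ∑_{j=0}^{w-n+2r-h-s} C(w,j) (-1)^j [k-n+w-j choose s]_q` for
`h+2+s ≤ w ≤ n`, and `A^{(s)}_w = 0` for `w < h+2+s`. -/
theorem stmt_18 (k h r n q s : ℕ) (hkh : k + h = 2 * r) (hk1 : r + 1 ≤ k) (hk2 : k < 2 * r)
    (hn : n = 2 * r + 2) (hs1 : r - h + 1 ≤ s) (hs2 : s ≤ 2 * r - h)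
    (F : Type) [Field F] [Fintype F] [DecidableEq F] (hq : q = Fintype.card F)
    (C : Submodule F (LIdx k h 2 → F))
    (hsys : ∀ x : Fin k → F, ∃! c : LIdx k h 2 → F,
      c ∈ C ∧ ∀ j : Fin k, c (Sum.inl (Fin.castLE (Nat.le_add_right k h) j)) = x j)
    (a : Fin 2 → Fin r → F) (ha : ∀ i j, a i j ≠ 0)
    (hloc : ∀ c ∈ C, ∀ i : Fin 2,
      c (Sum.inr i) = ∑ j : Fin r, a i j * c (Sum.inl (lCoord k h r 2 hkh i j)))
    (hmrc : ∀ E : Finset (LIdx k h 2), E.card = k + h →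
      (∀ i : Fin 2, (E ∩ lGroup k h r 2 i).card = r) →
      Module.finrank F
          (C.map (LinearMap.funLeft F F (Subtype.val : ↥E → LIdx k h 2))) = k ∧
      ∀ y ∈ C.map (LinearMap.funLeft F F (Subtype.val : ↥E → LIdx k h 2)),
        y ≠ 0 → h + 1 ≤ hammingNorm y)
    (As : ℕ → ℕ)
    (hAs : ∀ w, As w = Nat.card {D : Submodule F (LIdx k h 2 → F) //
      D ≤ C ∧ Module.finrank F D = s ∧
        Set.ncard {j : LIdx k h 2 | ∃ c ∈ D, c j ≠ 0} = w}) :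
    (∀ w, h + 2 + s ≤ w → w ≤ n →
      (As w : ℚ) = (n.choose w : ℚ) *
        ∑ j ∈ Finset.range (w + 2 * r - n - h - s + 1),
          (w.choose j : ℚ) * (-1 : ℚ) ^ j * gbinom q (k + w - n - j) s) ∧
    (∀ w, w < h + 2 + s → As w = 0) := by

  classical
  subst hq
  subst hn
  have hr2 : 2 ≤ r := by omega
  have hh1 : 1 ≤ h := by omega
  have hhr : h + 1 ≤ r := by omega
  have hs0 : 2 ≤ s := by omega
  have hrank : Module.finrank F C = k := finrank_code C hsys
  have hcardι : Fintype.card (LIdx k h 2) = 2 * r + 2 := by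
    simp only [Fintype.card_sum, Fintype.card_fin]
    omega
  have validE : ∀ x : Fin 2 → LIdx k h 2, (∀ i, x i ∈ lGroup k h r 2 i) →
      (Finset.univ \ {x 0, x 1}).card = k + h ∧
      (∀ i : Fin 2, ((Finset.univ \ {x 0, x 1}) ∩ lGroup k h r 2 i).card = r) := by
    intro x hx
    have honly : ∀ j i : Fin 2, x j ∈ lGroup k h r 2 i → j = i := by
      intro j i hji
      by_contra hne
      fin_cases j <;> fin_cases i
      · exact hne rfl
      · exact lGroup_not_mem_both (by omega) ⟨hx 0, hji⟩
      · exact lGroup_not_mem_both (by omega) ⟨hji, hx 1⟩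
      · exact hne rfl
    have hx01 : x 0 ≠ x 1 := by
      intro heq
      exact lGroup_not_mem_both (by omega) ⟨hx 0, heq ▸ hx 1⟩
    have hpair : ({x 0, x 1} : Finset (LIdx k h 2)).card = 2 := Finset.card_pair hx01
    constructor
    · rw [Finset.card_sdiff_of_subset (Finset.subset_univ _), Finset.card_univ, hcardι, hpair]
      omega
    · intro i
      have hgi : (Finset.univ \ {x 0, x 1}) ∩ lGroup k h r 2 i = lGroup k h r 2 i \ {x i} := by
        ext y
        simp only [Finset.mem_inter, Finset.mem_sdiff, Finset.mem_univ, true_and,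
          Finset.mem_insert, Finset.mem_singleton]
        constructor
        · rintro ⟨hny, hyS⟩
          refine ⟨hyS, fun hyx => hny ?_⟩
          subst hyx
          fin_cases i
          · exact Or.inl rfl
          · exact Or.inr rfl
        · rintro ⟨hyS, hny⟩
          refine ⟨?_, hyS⟩
          rintro (rfl | rfl)
          · rw [honly 0 i hyS] at hny
            exact hny rfl
          · rw [honly 1 i hyS] at hny
            exact hny rfl
      rw [hgi, Finset.card_sdiff_of_subset (Finset.singleton_subset_iff.mpr (hx i)),
        lGroup_card hkh i, Finset.card_singleton]
      omega
  have hcase1 : ∀ (T : Finset (LIdx k h 2)) (j : Fin 2), T ⊆ lGroup k h r 2 j →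
      Module.finrank F ↥(C ⊓ zeroOnSet F T) ≤ r - h := by
    intro T j hTj
    have hx : ∀ i : Fin 2, (Sum.inr i : LIdx k h 2) ∈ lGroup k h r 2 i :=
      fun i => inr_mem_lGroup.mpr rfl
    obtain ⟨hE1, hE2⟩ := validE (fun i => Sum.inr i) hx
    obtain ⟨hdim, hwt⟩ := hmrc _ hE1 hE2
    have hb := dim_shortened_le C hrank _ hdim hwt T
      ((Finset.univ \ {Sum.inr 0, Sum.inr 1}) ∩ lGroup k h r 2 j)
      Finset.inter_subset_left
      (fun z hzT hzE => Finset.mem_inter.mpr ⟨hzE, hTj hzT⟩)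
    rw [hE2 j] at hb
    exact hb
  have hcase2 : ∀ T : Finset (LIdx k h 2),
      (T ∩ lGroup k h r 2 0).Nonempty → (T ∩ lGroup k h r 2 1).Nonempty →
      Module.finrank F ↥(C ⊓ zeroOnSet F T) ≤ T.card - 2 - h := by
    intro T h0 h1
    obtain ⟨x0, hx0⟩ := h0
    obtain ⟨x1, hx1⟩ := h1
    rw [Finset.mem_inter] at hx0 hx1
    have hx : ∀ i : Fin 2, (fun i : Fin 2 => if i = 0 then x0 else x1) i ∈ lGroup k h r 2 i := by
      intro i
      fin_cases i
      · exact hx0.2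
      · exact hx1.2
    obtain ⟨hE1, hE2⟩ := validE _ hx
    have hne : x0 ≠ x1 := by
      intro heq
      exact lGroup_not_mem_both (k := k) (h := h) (by omega) ⟨hx0.2, heq ▸ hx1.2⟩
    obtain ⟨hdim, hwt⟩ := hmrc _ hE1 hE2
    have hbound := dim_shortened_le C hrank _ hdim hwt T (T \ {x0, x1})
      (fun z hz => by
        rw [Finset.mem_sdiff] at hz
        exact Finset.mem_sdiff.mpr ⟨Finset.mem_univ _, hz.2⟩)
      (fun z hzT hzE => Finset.mem_sdiff.mpr ⟨hzT, (Finset.mem_sdiff.mp hzE).2⟩)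
    have hcardT : (T \ {x0, x1}).card = T.card - 2 := by
      rw [Finset.card_sdiff_of_subset (by
        intro z hz
        simp only [Finset.mem_insert, Finset.mem_singleton] at hz
        rcases hz with rfl | rfl
        · exact hx0.1
        · exact hx1.1), Finset.card_pair hne]
    rw [hcardT] at hbound
    exact hbound
  have hcover : ∀ T : Finset (LIdx k h 2), ¬ (T ∩ lGroup k h r 2 0).Nonempty →
      T ⊆ lGroup k h r 2 1 := by
    intro T hT z hz
    rcases lGroup_cover hkh z with hz0 | hz1
    · exact absurd ⟨z, Finset.mem_inter.mpr ⟨hz, hz0⟩⟩ hT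
    · exact hz1
  have hcover' : ∀ T : Finset (LIdx k h 2), ¬ (T ∩ lGroup k h r 2 1).Nonempty →
      T ⊆ lGroup k h r 2 0 := by
    intro T hT z hz
    rcases lGroup_cover hkh z with hz0 | hz1
    · exact hz0
    · exact absurd ⟨z, Finset.mem_inter.mpr ⟨hz, hz1⟩⟩ hT
  have master_lt : ∀ T : Finset (LIdx k h 2), T.card < h + 2 + s →
      Module.finrank F ↥(C ⊓ zeroOnSet F T) < s := by
    intro T hT
    by_cases h0 : (T ∩ lGroup k h r 2 0).Nonempty
    · by_cases h1 : (T ∩ lGroup k h r 2 1).Nonempty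
      · have := hcase2 T h0 h1
        omega
      · have := hcase1 T 0 (hcover' T h1)
        omega
    · have := hcase1 T 1 (hcover T h0)
      omega
  have master_eq : ∀ T : Finset (LIdx k h 2), h + 2 + s ≤ T.card →
      Module.finrank F ↥(C ⊓ zeroOnSet F T) = T.card - (h + 2) := by
    intro T hT
    have hTcard_le : T.card ≤ 2 * r + 2 := by
      have := Finset.card_le_univ T
      rwa [hcardι] at this
    have hge := dim_shortened_ge C hrank T
    rw [Finset.card_compl] at hge
    have h0 : (T ∩ lGroup k h r 2 0).Nonempty := by
      by_contra hn0
      have hcc := Finset.card_le_card (hcover T hn0)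
      rw [lGroup_card hkh] at hcc
      omega
    have h1 : (T ∩ lGroup k h r 2 1).Nonempty := by
      by_contra hn1
      have hcc := Finset.card_le_card (hcover' T hn1)
      rw [lGroup_card hkh] at hcc
      omega
    have hle := hcase2 T h0 h1
    omega
  haveI hfinsub : Finite (Submodule F (LIdx k h 2 → F)) :=
    Finite.of_injective (fun D => (D : Set (LIdx k h 2 → F))) SetLike.coe_injective
  haveI : Fintype (Submodule F (LIdx k h 2 → F)) := Fintype.ofFinite _
  set suppF : Submodule F (LIdx k h 2 → F) → Finset (LIdx k h 2) :=
    fun D => Finset.univ.filter (fun j => ∃ c ∈ D, c j ≠ 0) with hsuppF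
  have hncard : ∀ D : Submodule F (LIdx k h 2 → F),
      Set.ncard {j : LIdx k h 2 | ∃ c ∈ D, c j ≠ 0} = (suppF D).card := by
    intro D
    rw [Set.ncard_eq_toFinset_card', Set.toFinset_setOf]
  have hsupp_le : ∀ (D : Submodule F (LIdx k h 2 → F)) (T : Finset (LIdx k h 2)),
      D ≤ zeroOnSet F T ↔ suppF D ⊆ T := by
    intro D T
    constructor
    · intro hD j hj
      rw [hsuppF, Finset.mem_filter] at hj
      obtain ⟨c, hc, hcj⟩ := hj.2
      by_contra hjT
      exact hcj (hD hc j hjT)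
    · intro hsub c hc i hiT
      by_contra hne
      exact hiT (hsub (by
        rw [hsuppF, Finset.mem_filter]
        exact ⟨Finset.mem_univ _, ⟨c, hc, hne⟩⟩))
  have hgb : ∀ T : Finset (LIdx k h 2),
      ((Finset.univ.filter fun D : Submodule F (LIdx k h 2 → F) =>
          D ≤ C ∧ Module.finrank F D = s ∧ suppF D ⊆ T).card : ℚ) =
        gbinom (Fintype.card F) (T.card - (h + 2)) s := by
    intro T
    have hfe : (Finset.univ.filter fun D : Submodule F (LIdx k h 2 → F) =>
        D ≤ C ∧ Module.finrank F D = s ∧ suppF D ⊆ T) =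
        (Finset.univ.filter fun D : Submodule F (LIdx k h 2 → F) =>
          D ≤ C ⊓ zeroOnSet F T ∧ Module.finrank F D = s) := by
      ext D
      simp only [Finset.mem_filter, Finset.mem_univ, true_and, le_inf_iff]
      constructor
      · rintro ⟨h1, h2, h3⟩
        exact ⟨⟨h1, (hsupp_le D T).mpr h3⟩, h2⟩
      · rintro ⟨⟨h1, h2⟩, h3⟩
        exact ⟨h1, h3, (hsupp_le D T).mp h2⟩
    rw [hfe, ← Fintype.card_subtype, ← Nat.card_eq_fintype_card, card_subspaces_le_q]
    by_cases hc : h + 2 + s ≤ T.card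
    · rw [master_eq T hc]
    · have hlt := master_lt T (by omega)
      rw [gbinom_eq_zero _ _ _ (by omega), gbinom_eq_zero _ _ _ (by omega)]
  constructor
  · intro w hw1 hw2
    have hAsw : As w = ∑ T ∈ Finset.powersetCard w (Finset.univ : Finset (LIdx k h 2)),
        (Finset.univ.filter fun D : Submodule F (LIdx k h 2 → F) =>
          D ≤ C ∧ Module.finrank F D = s ∧ suppF D = T).card := by
      rw [hAs w]
      have e1 : {D : Submodule F (LIdx k h 2 → F) // D ≤ C ∧ Module.finrank F D = s ∧
          Set.ncard {j : LIdx k h 2 | ∃ c ∈ D, c j ≠ 0} = w} ≃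
          {D : Submodule F (LIdx k h 2 → F) // D ≤ C ∧ Module.finrank F D = s ∧
            (suppF D).card = w} :=
        Equiv.subtypeEquivRight (fun D => by rw [hncard D])
      rw [Nat.card_congr e1, Nat.card_eq_fintype_card, Fintype.card_subtype]
      rw [Finset.card_eq_sum_card_fiberwise (f := suppF)
        (t := Finset.powersetCard w Finset.univ) (fun D hD => by
          rw [Finset.mem_coe, Finset.mem_filter] at hD
          exact Finset.mem_powersetCard.mpr ⟨Finset.subset_univ _, hD.2.2.2⟩)]
      refine Finset.sum_congr rfl fun T hT => ?_
      rw [Finset.mem_powersetCard] at hT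
      rw [Finset.filter_filter]
      congr 1
      ext D
      simp only [Finset.mem_filter, Finset.mem_univ, true_and]
      constructor
      · rintro ⟨⟨h1, h2, _⟩, h4⟩
        exact ⟨h1, h2, h4⟩
      · rintro ⟨h1, h2, h4⟩
        exact ⟨⟨h1, h2, by rw [h4, hT.2]⟩, h4⟩
    have hgsumN : ∀ T : Finset (LIdx k h 2),
        (Finset.univ.filter fun D : Submodule F (LIdx k h 2 → F) =>
          D ≤ C ∧ Module.finrank F D = s ∧ suppF D ⊆ T).card =
        ∑ T' ∈ T.powerset, (Finset.univ.filter fun D : Submodule F (LIdx k h 2 → F) =>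
          D ≤ C ∧ Module.finrank F D = s ∧ suppF D = T').card := by
      intro T
      rw [Finset.card_eq_sum_card_fiberwise (f := suppF) (t := T.powerset) (fun D hD => by
        rw [Finset.mem_coe, Finset.mem_filter] at hD
        exact Finset.mem_powerset.mpr hD.2.2.2)]
      refine Finset.sum_congr rfl fun T' hT' => ?_
      rw [Finset.mem_powerset] at hT'
      rw [Finset.filter_filter]
      congr 1
      ext D
      simp only [Finset.mem_filter, Finset.mem_univ, true_and]
      constructor
      · rintro ⟨⟨h1, h2, _⟩, h4⟩
        exact ⟨h1, h2, h4⟩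
      · rintro ⟨h1, h2, h4⟩
        exact ⟨⟨h1, h2, by rw [h4]; exact hT'⟩, h4⟩
    have hmob := mobius_powerset
      (fun T => ((Finset.univ.filter fun D : Submodule F (LIdx k h 2 → F) =>
        D ≤ C ∧ Module.finrank F D = s ∧ suppF D = T).card : ℚ))
      (fun T => ((Finset.univ.filter fun D : Submodule F (LIdx k h 2 → F) =>
        D ≤ C ∧ Module.finrank F D = s ∧ suppF D ⊆ T).card : ℚ))
      (fun T => by simp only [hgsumN T, Nat.cast_sum])
    have hsub : Finset.range (w + 2 * r - (2 * r + 2) - h - s + 1) ⊆ Finset.range (w + 1) :=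
      Finset.range_subset_range.mpr (by omega)
    have hzero : ∀ j ∈ Finset.range (w + 1),
        j ∉ Finset.range (w + 2 * r - (2 * r + 2) - h - s + 1) →
        (w.choose j : ℚ) * (-1 : ℚ) ^ j *
          gbinom (Fintype.card F) (w - j - (h + 2)) s = 0 := by
      intro j hj hj2
      rw [Finset.mem_range] at hj
      rw [Finset.mem_range, not_lt] at hj2
      rw [gbinom_eq_zero _ _ _ (by omega), mul_zero]
    have hT_eval : ∀ T ∈ Finset.powersetCard w (Finset.univ : Finset (LIdx k h 2)),
        ((Finset.univ.filter fun D : Submodule F (LIdx k h 2 → F) =>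
          D ≤ C ∧ Module.finrank F D = s ∧ suppF D = T).card : ℚ) =
        ∑ j ∈ Finset.range (w + 2 * r - (2 * r + 2) - h - s + 1),
          (w.choose j : ℚ) * (-1 : ℚ) ^ j *
            gbinom (Fintype.card F) (k + w - (2 * r + 2) - j) s := by
      intro T hT
      rw [Finset.mem_powersetCard] at hT
      have step2 : ∀ j ∈ Finset.range (w + 1),
          w.choose (w + 1 - 1 - j) • ((-1 : ℚ) ^ (w - (w + 1 - 1 - j)) *
            gbinom (Fintype.card F) ((w + 1 - 1 - j) - (h + 2)) s) =
          (w.choose j : ℚ) * (-1 : ℚ) ^ j *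
            gbinom (Fintype.card F) (w - j - (h + 2)) s := by
        intro j hj
        rw [Finset.mem_range] at hj
        have e1 : w + 1 - 1 - j = w - j := by omega
        have e2 : w - (w - j) = j := by omega
        have e3 : w.choose (w - j) = w.choose j := Nat.choose_symm (by omega)
        rw [e1, e2, e3, nsmul_eq_mul]
        ring
      calc ((Finset.univ.filter fun D : Submodule F (LIdx k h 2 → F) =>
            D ≤ C ∧ Module.finrank F D = s ∧ suppF D = T).card : ℚ)
          = ∑ T' ∈ T.powerset, (-1 : ℚ) ^ (T.card - T'.card) *
              ((Finset.univ.filter fun D : Submodule F (LIdx k h 2 → F) =>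
                D ≤ C ∧ Module.finrank F D = s ∧ suppF D ⊆ T').card : ℚ) := hmob T
        _ = ∑ T' ∈ T.powerset, ((-1 : ℚ) ^ (w - T'.card) *
              gbinom (Fintype.card F) (T'.card - (h + 2)) s) := by
            refine Finset.sum_congr rfl fun T' hT' => ?_
            rw [hgb T', hT.2]
        _ = ∑ m ∈ Finset.range (T.card + 1), T.card.choose m •
              ((-1 : ℚ) ^ (w - m) * gbinom (Fintype.card F) (m - (h + 2)) s) :=
            Finset.sum_powerset_apply_card
              (f := fun m => (-1 : ℚ) ^ (w - m) * gbinom (Fintype.card F) (m - (h + 2)) s)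
        _ = ∑ m ∈ Finset.range (w + 1), w.choose m •
              ((-1 : ℚ) ^ (w - m) * gbinom (Fintype.card F) (m - (h + 2)) s) := by
            rw [hT.2]
        _ = ∑ j ∈ Finset.range (w + 1), w.choose (w + 1 - 1 - j) •
              ((-1 : ℚ) ^ (w - (w + 1 - 1 - j)) *
                gbinom (Fintype.card F) ((w + 1 - 1 - j) - (h + 2)) s) :=
            (Finset.sum_range_reflect _ _).symm
        _ = ∑ j ∈ Finset.range (w + 1), (w.choose j : ℚ) * (-1 : ℚ) ^ j *
              gbinom (Fintype.card F) (w - j - (h + 2)) s :=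
            Finset.sum_congr rfl step2
        _ = ∑ j ∈ Finset.range (w + 2 * r - (2 * r + 2) - h - s + 1),
              (w.choose j : ℚ) * (-1 : ℚ) ^ j *
                gbinom (Fintype.card F) (w - j - (h + 2)) s :=
            (Finset.sum_subset hsub hzero).symm
        _ = ∑ j ∈ Finset.range (w + 2 * r - (2 * r + 2) - h - s + 1),
              (w.choose j : ℚ) * (-1 : ℚ) ^ j *
                gbinom (Fintype.card F) (k + w - (2 * r + 2) - j) s := by
            refine Finset.sum_congr rfl fun j hj => ?_
            rw [Finset.mem_range] at hj
            have e4 : w - j - (h + 2) = k + w - (2 * r + 2) - j := by omega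
            rw [e4]
    rw [hAsw, Nat.cast_sum, Finset.sum_congr rfl hT_eval, Finset.sum_const,
      Finset.card_powersetCard, Finset.card_univ, hcardι, nsmul_eq_mul]
  · intro w hw
    rw [hAs w]
    have hempty : IsEmpty {D : Submodule F (LIdx k h 2 → F) // D ≤ C ∧
        Module.finrank F D = s ∧
        Set.ncard {j : LIdx k h 2 | ∃ c ∈ D, c j ≠ 0} = w} := by
      refine ⟨fun X => ?_⟩
      obtain ⟨D, hD1, hD2, hD3⟩ := X
      rw [hncard D] at hD3
      have hle : D ≤ C ⊓ zeroOnSet F (suppF D) :=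
        le_inf hD1 ((hsupp_le D _).mpr (Finset.Subset.refl _))
      have hmono := Submodule.finrank_mono hle
      have hlt := master_lt (suppF D) (by omega)
      omega
    rw [Nat.card_of_isEmpty]
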